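/- In the mixture of spherical Gaussians model under the non-degeneracy condition, suppose η ∈ ℝ^d is such that ηᵀμ_1,…,ηᵀμ_k are distinct and non-zero. Then the matrix M_GMM(η) := M_2^{†1/2} M_3(η) M_2^{†1/2} is diagonalizable, it has exactly k non-zero eigenvalues each of geometric multiplicity one, and its non-zero eigenvalue/unit-eigenvector pairs (λ_1,v_1),…,(λ_k,v_k) satisfy, for some permutation π of [k] and signs s_1,…,s_k ∈ {±1}: λ_i = ηᵀμ_{π(i)} and M_2^{1/2} v_i = s_i √(w_{π(i)}) μ_{π(i)}. Consequently μ_{π(i)} = (λ_i / (ηᵀ M_2^{1/2} v_i)) M_2^{1/2} v_i, σ_i² = (1/w_i) e_iᵀ A^† M_1, and w_i = e_iᵀ A^† E[x]. -/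

import Mathlib

open Matrix
open scoped BigOperators Classical

/-- The four Penrose conditions characterizing the Moore–Penrose pseudoinverse. -/
def IsMoorePenrose {m n : ℕ} (M : Matrix (Fin m) (Fin n) ℝ) (X : Matrix (Fin n) (Fin m) ℝ) : Prop :=
  M * X * M = M ∧ X * M * X = X ∧ (M * X)ᵀ = M * X ∧ (X * M)ᵀ = X * M

/-- Moore–Penrose pseudoinverse (it exists and is unique for every real matrix). -/
noncomputable def pinv {m n : ℕ} (M : Matrix (Fin m) (Fin n) ℝ) : Matrix (Fin n) (Fin m) ℝ :=
  if h : ∃ X, IsMoorePenrose M X then h.choose else 0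

/-- Positive semidefinite square root of a matrix (junk value `0` if not psd). -/
noncomputable def psdSqrt {n : ℕ} (M : Matrix (Fin n) (Fin n) ℝ) : Matrix (Fin n) (Fin n) ℝ :=
  if h : M.PosSemidef then
    (h.1.eigenvectorUnitary : Matrix (Fin n) (Fin n) ℝ) *
      Matrix.diagonal ((↑) ∘ (√·) ∘ h.1.eigenvalues) *
      (star h.1.eigenvectorUnitary : Matrix (Fin n) (Fin n) ℝ)
  else 0

/-- Pseudoinverse square root `M^{†1/2}` of a psd matrix. -/
noncomputable def pinvSqrt {n : ℕ} (M : Matrix (Fin n) (Fin n) ℝ) : Matrix (Fin n) (Fin n) ℝ :=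
  pinv (psdSqrt M)


lemma mp_unique {m n : ℕ} {M : Matrix (Fin m) (Fin n) ℝ} {X Y : Matrix (Fin n) (Fin m) ℝ}
    (hX : IsMoorePenrose M X) (hY : IsMoorePenrose M Y) : X = Y := by
  obtain ⟨hX1, hX2, hX3, hX4⟩ := hX
  obtain ⟨hY1, hY2, hY3, hY4⟩ := hY
  have h1 : M * X = M * Y := by
    calc M * X = (M * X)ᵀ := hX3.symm
      _ = ((M * Y * M) * X)ᵀ := by rw [hY1]
      _ = ((M * Y) * (M * X))ᵀ := by simp only [Matrix.mul_assoc]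
      _ = (M * X)ᵀ * (M * Y)ᵀ := by rw [transpose_mul]
      _ = (M * X) * (M * Y) := by rw [hX3, hY3]
      _ = (M * X * M) * Y := by simp only [Matrix.mul_assoc]
      _ = M * Y := by rw [hX1]
  have h2 : X * M = Y * M := by
    calc X * M = (X * M)ᵀ := hX4.symm
      _ = (X * (M * Y * M))ᵀ := by rw [hY1]
      _ = ((X * M) * (Y * M))ᵀ := by simp only [Matrix.mul_assoc]
      _ = (Y * M)ᵀ * (X * M)ᵀ := by rw [transpose_mul]
      _ = (Y * M) * (X * M) := by rw [hY4, hX4]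
      _ = Y * (M * X * M) := by simp only [Matrix.mul_assoc]
      _ = Y * M := by rw [hX1]
  calc X = X * M * X := hX2.symm
    _ = Y * M * X := by rw [h2]
    _ = Y * (M * X) := by rw [Matrix.mul_assoc]
    _ = Y * (M * Y) := by rw [h1]
    _ = Y * M * Y := by rw [Matrix.mul_assoc]
    _ = Y := hY2

lemma pinv_eq {m n : ℕ} {M : Matrix (Fin m) (Fin n) ℝ} {X : Matrix (Fin n) (Fin m) ℝ}
    (h : IsMoorePenrose M X) : pinv M = X := by
  have hex : ∃ Y, IsMoorePenrose M Y := ⟨X, h⟩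
  rw [pinv, dif_pos hex]
  exact mp_unique hex.choose_spec h

open scoped MatrixOrder in
lemma psdSqrt_eq_cfc {n : ℕ} {M : Matrix (Fin n) (Fin n) ℝ} (hM : M.PosSemidef) :
    psdSqrt M = CFC.sqrt M := by
  rw [psdSqrt, dif_pos hM, CFC.sqrt_eq_real_sqrt M hM.nonneg, cfcₙ_eq_cfc, hM.1.cfc_eq,
    Matrix.IsHermitian.cfc]
  simp [Function.comp_def]

open scoped MatrixOrder in
lemma psdSqrt_eq {n : ℕ} {M N : Matrix (Fin n) (Fin n) ℝ} (hM : M.PosSemidef)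
    (hN : N.PosSemidef) (h : N * N = M) : psdSqrt M = N := by
  rw [psdSqrt_eq_cfc hM]
  exact CFC.sqrt_unique h hN.nonneg

open scoped MatrixOrder in
lemma psdSqrt_posSemidef {n : ℕ} {M : Matrix (Fin n) (Fin n) ℝ} (hM : M.PosSemidef) :
    (psdSqrt M).PosSemidef := by
  rw [psdSqrt_eq_cfc hM]; exact (CFC.sqrt_nonneg M).posSemidef

open scoped MatrixOrder in
lemma psdSqrt_mul_self {n : ℕ} {M : Matrix (Fin n) (Fin n) ℝ} (hM : M.PosSemidef) :
    psdSqrt M * psdSqrt M = M := by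
  rw [psdSqrt_eq_cfc hM]; exact CFC.sqrt_mul_sqrt_self M hM.nonneg

lemma inj_of_rank {d k : ℕ} (A : Matrix (Fin d) (Fin k) ℝ) (h : A.rank = k) :
    ∀ x : Fin k → ℝ, A *ᵥ x = 0 → x = 0 := by
  intro x hx
  have hrn := LinearMap.finrank_range_add_finrank_ker A.mulVecLin
  rw [Matrix.rank] at h
  rw [h, Module.finrank_fin_fun] at hrn
  have hker : LinearMap.ker A.mulVecLin = ⊥ := by
    have : Module.finrank ℝ (LinearMap.ker A.mulVecLin) = 0 := by omega
    exact Submodule.finrank_eq_zero.mp this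
  have hxk : x ∈ LinearMap.ker A.mulVecLin := by
    simp [LinearMap.mem_ker, Matrix.mulVecLin_apply, hx]
  rw [hker] at hxk
  simpa using hxk

lemma posDef_transpose_mul_self {d k : ℕ} (A : Matrix (Fin d) (Fin k) ℝ)
    (hinj : ∀ x, A *ᵥ x = 0 → x = 0) : (Aᵀ * A).PosDef := by
  have h := Matrix.PosDef.conjTranspose_mul_self A
    (fun x y hxy => sub_eq_zero.mp (hinj _ (by rw [mulVec_sub, hxy, sub_self])))
  rwa [conjTranspose_eq_transpose_of_trivial] at h

lemma pinv_mul_self_of_inj {d k : ℕ} (A : Matrix (Fin d) (Fin k) ℝ)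
    (hinj : ∀ x, A *ᵥ x = 0 → x = 0) : pinv A * A = 1 := by
  have hpd := posDef_transpose_mul_self A hinj
  have hdet : IsUnit (Aᵀ * A).det := isUnit_iff_ne_zero.mpr (ne_of_gt hpd.det_pos)
  have hGt : (Aᵀ * A)ᵀ = Aᵀ * A := by rw [transpose_mul, transpose_transpose]
  have hGit : ((Aᵀ * A)⁻¹)ᵀ = (Aᵀ * A)⁻¹ := by rw [transpose_nonsing_inv, hGt]
  have hXA : ((Aᵀ * A)⁻¹ * Aᵀ) * A = 1 := by
    rw [Matrix.mul_assoc]; exact nonsing_inv_mul _ hdet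
  have hmp : IsMoorePenrose A ((Aᵀ * A)⁻¹ * Aᵀ) := by
    refine ⟨?_, ?_, ?_, ?_⟩
    · rw [Matrix.mul_assoc, hXA, Matrix.mul_one]
    · rw [Matrix.mul_assoc, ← Matrix.mul_assoc ((Aᵀ * A)⁻¹ * Aᵀ), hXA, Matrix.one_mul]
    · calc (A * ((Aᵀ * A)⁻¹ * Aᵀ))ᵀ = A * ((Aᵀ * A)⁻¹)ᵀ * Aᵀ := by
            simp only [transpose_mul, transpose_transpose, Matrix.mul_assoc]
        _ = A * ((Aᵀ * A)⁻¹ * Aᵀ) := by rw [hGit, Matrix.mul_assoc]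
    · rw [hXA, transpose_one]
  rw [pinv_eq hmp]
  exact hXA

/-- **Moment-based estimator (exact moments).**
Under the non-degeneracy condition, if `ηᵀμ_1, …, ηᵀμ_k` are distinct and non-zero, then
`M_GMM(η) := M₂^{†1/2} M₃(η) M₂^{†1/2}` is diagonalizable, has exactly `k` non-zero
eigenvalues each of geometric multiplicity one, and its non-zero eigenvalue / unit
eigenvector pairs `(λ_i, v_i)` satisfy, for some permutation `π` and signs `s_i ∈ {±1}`:
`λ_i = ηᵀ μ_{π i}` and `M₂^{1/2} v_i = s_i √(w_{π i}) μ_{π i}`; consequently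
`μ_{π i} = (λ_i / (ηᵀ M₂^{1/2} v_i)) M₂^{1/2} v_i`, `σ_i² = (1/w_i) e_iᵀ A^† M₁`, and
`w_i = e_iᵀ A^† E[x]`. -/
theorem gmm_spectral_estimator
    (d k : ℕ) (w : Fin k → ℝ) (μ : Fin k → Fin d → ℝ) (σ2 : Fin k → ℝ)
    (hσ2 : ∀ i, 0 ≤ σ2 i)
    (hw_pos : ∀ i, 0 < w i) (hw_sum : ∑ i, w i = 1)
    (A : Matrix (Fin d) (Fin k) ℝ) (hA : A = Matrix.of fun r c => μ c r)
    (hrank : A.rank = k)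
    (η : Fin d → ℝ)
    (hη_distinct : Function.Injective fun i => η ⬝ᵥ μ i)
    (hη_nonzero : ∀ i, η ⬝ᵥ μ i ≠ 0)
    (M1 : Fin d → ℝ) (hM1 : M1 = ∑ i, (w i * σ2 i) • μ i)
    (M2 : Matrix (Fin d) (Fin d) ℝ) (hM2 : M2 = ∑ i, w i • Matrix.vecMulVec (μ i) (μ i))
    (M3η : Matrix (Fin d) (Fin d) ℝ)
    (hM3η : M3η = ∑ i, (w i * (η ⬝ᵥ μ i)) • Matrix.vecMulVec (μ i) (μ i))
    (MG : Matrix (Fin d) (Fin d) ℝ) (hMG : MG = pinvSqrt M2 * M3η * pinvSqrt M2) :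
    -- `M_GMM(η)` is diagonalizable
    (∃ (C : Matrix (Fin d) (Fin d) ℝ) (D : Fin d → ℝ),
        IsUnit C.det ∧ MG = C * Matrix.diagonal D * C⁻¹) ∧
    ∃ (lam : Fin k → ℝ) (v : Fin k → Fin d → ℝ) (π : Equiv.Perm (Fin k)) (s : Fin k → ℝ),
      (∀ i, s i = 1 ∨ s i = -1) ∧
      -- `(lam i, v i)` are non-zero eigenvalue / unit-norm eigenvector pairs
      (∀ i, lam i ≠ 0 ∧ v i ⬝ᵥ v i = 1 ∧ MG *ᵥ v i = lam i • v i) ∧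
      -- every non-zero eigenvalue of `M_GMM(η)` is one of the `lam i`
      (∀ t : ℝ, t ≠ 0 → (∃ u : Fin d → ℝ, u ≠ 0 ∧ MG *ᵥ u = t • u) → ∃ i, t = lam i) ∧
      -- each has geometric multiplicity one
      (∀ i, Module.finrank ℝ (Module.End.eigenspace (Matrix.toLin' MG) (lam i)) = 1) ∧
      (∀ i, lam i = η ⬝ᵥ μ (π i)) ∧
      (∀ i, psdSqrt M2 *ᵥ v i = (s i * Real.sqrt (w (π i))) • μ (π i)) ∧
      -- recovery of the parameters
      (∀ i, μ (π i) = (lam i / (η ⬝ᵥ (psdSqrt M2 *ᵥ v i))) • (psdSqrt M2 *ᵥ v i)) ∧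
      (∀ i, σ2 i = (1 / w i) * (pinv A *ᵥ M1) i) ∧
      (∀ i, w i = (pinv A *ᵥ (∑ j, w j • μ j)) i) := by
  classical
  have hwne : ∀ i, w i ≠ 0 := fun i => (hw_pos i).ne'
  have hsq_pos : ∀ i, 0 < Real.sqrt (w i) := fun i => Real.sqrt_pos.mpr (hw_pos i)
  have hsqne : ∀ i, Real.sqrt (w i) ≠ 0 := fun i => (hsq_pos i).ne'
  have hsqsq : ∀ i, Real.sqrt (w i) * Real.sqrt (w i) = w i :=
    fun i => Real.mul_self_sqrt (hw_pos i).le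
  set lamv : Fin k → ℝ := fun i => η ⬝ᵥ μ i with hlamv
  have hlam_ne : ∀ i, lamv i ≠ 0 := hη_nonzero
  have hlam_inj : Function.Injective lamv := hη_distinct
  have hAinj := inj_of_rank A hrank
  set B : Matrix (Fin d) (Fin k) ℝ := A * Matrix.diagonal (fun i => Real.sqrt (w i)) with hBdef
  have hBapp : ∀ r c, B r c = Real.sqrt (w c) * μ c r := by
    intro r c
    rw [hBdef, Matrix.mul_diagonal, hA]
    simp [mul_comm]
  have hBinj : ∀ x, B *ᵥ x = 0 → x = 0 := by
    intro x hx
    rw [hBdef, ← mulVec_mulVec] at hx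
    have h1 := hAinj _ hx
    funext i
    have h2 := congrFun h1 i
    rw [mulVec_diagonal] at h2
    have := mul_eq_zero.mp h2
    simpa [hsqne i] using this
  have hGpd : (Bᵀ * B).PosDef := posDef_transpose_mul_self B hBinj
  have hGps := hGpd.posSemidef
  set S : Matrix (Fin k) (Fin k) ℝ := psdSqrt (Bᵀ * B) with hSdef
  have hSps : S.PosSemidef := by
    rw [hSdef]; exact psdSqrt_posSemidef hGps
  have hSS : S * S = Bᵀ * B := by
    rw [hSdef]; exact psdSqrt_mul_self hGps
  have hSt : Sᵀ = S := by
    have h := hSps.1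
    rwa [Matrix.IsHermitian, conjTranspose_eq_transpose_of_trivial] at h
  have hSdet : IsUnit S.det := by
    rw [isUnit_iff_ne_zero]
    intro h0
    have : (Bᵀ * B).det = 0 := by rw [← hSS, det_mul, h0, zero_mul]
    exact (ne_of_gt hGpd.det_pos) this
  have hSN : S * S⁻¹ = 1 := mul_nonsing_inv _ hSdet
  have hNS : S⁻¹ * S = 1 := nonsing_inv_mul _ hSdet
  have hNt : (S⁻¹)ᵀ = S⁻¹ := by rw [transpose_nonsing_inv, hSt]
  have r1 : ∀ (p : Type) (X : Matrix (Fin k) p ℝ), S * (S⁻¹ * X) = X := by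
    intro p X; rw [← Matrix.mul_assoc, hSN, Matrix.one_mul]
  have r2 : ∀ (p : Type) (X : Matrix (Fin k) p ℝ), S⁻¹ * (S * X) = X := by
    intro p X; rw [← Matrix.mul_assoc, hNS, Matrix.one_mul]
  have r3 : ∀ (p : Type) (X : Matrix (Fin k) p ℝ), Bᵀ * (B * X) = S * (S * X) := by
    intro p X; rw [← Matrix.mul_assoc S S X, hSS, Matrix.mul_assoc Bᵀ B X]
  have hM2B : M2 = B * Bᵀ := by
    rw [hM2]; ext r s
    rw [Matrix.mul_apply]
    simp only [Matrix.sum_apply, Matrix.smul_apply, vecMulVec_apply, smul_eq_mul,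
      transpose_apply]
    refine Finset.sum_congr rfl fun c _ => ?_
    rw [hBapp, hBapp]
    linear_combination (-(μ c r * μ c s)) * hsqsq c
  have hM3B : M3η = B * Matrix.diagonal lamv * Bᵀ := by
    rw [hM3η]; ext r s
    rw [Matrix.mul_apply]
    simp only [Matrix.sum_apply, Matrix.smul_apply, vecMulVec_apply, smul_eq_mul,
      transpose_apply, Matrix.mul_diagonal]
    refine Finset.sum_congr rfl fun c _ => ?_
    rw [hBapp, hBapp]
    simp only [hlamv]
    linear_combination (-((η ⬝ᵥ μ c) * μ c r * μ c s)) * hsqsq c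
  have hpsd : psdSqrt M2 = B * (S⁻¹ * Bᵀ) := by
    apply psdSqrt_eq
    · rw [hM2B]
      have h := posSemidef_self_mul_conjTranspose B
      rwa [conjTranspose_eq_transpose_of_trivial] at h
    · have h1 : B * (S⁻¹ * Bᵀ) = (B * S⁻¹) * S * (B * S⁻¹)ᴴ := by
        rw [conjTranspose_eq_transpose_of_trivial]
        simp only [transpose_mul, hNt, Matrix.mul_assoc, r1, r2]
      rw [h1]
      exact hSps.mul_mul_conjTranspose_same _
    · rw [hM2B]
      simp only [Matrix.mul_assoc, r3, r1, r2]
  have hpinv : pinvSqrt M2 = B * (S⁻¹ * (S⁻¹ * (S⁻¹ * Bᵀ))) := by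
    rw [pinvSqrt, hpsd]
    apply pinv_eq
    refine ⟨?_, ?_, ?_, ?_⟩
    · simp only [Matrix.mul_assoc, r3, r1, r2, hSN, hNS, Matrix.mul_one, Matrix.one_mul]
    · simp only [Matrix.mul_assoc, r3, r1, r2, hSN, hNS, Matrix.mul_one, Matrix.one_mul]
    · simp only [transpose_mul, transpose_transpose, hSt, hNt, Matrix.mul_assoc, r3, r1, r2,
        hSN, hNS, Matrix.mul_one, Matrix.one_mul]
    · simp only [transpose_mul, transpose_transpose, hSt, hNt, Matrix.mul_assoc, r3, r1, r2,
        hSN, hNS, Matrix.mul_one, Matrix.one_mul]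
  set P : Matrix (Fin d) (Fin k) ℝ := B * S⁻¹ with hPdef
  have hMGP : MG = P * Matrix.diagonal lamv * Pᵀ := by
    rw [hMG, hpinv, hM3B, hPdef]
    simp only [transpose_mul, transpose_transpose, hSt, hNt, Matrix.mul_assoc, r3, r1, r2,
      hSN, hNS, Matrix.mul_one, Matrix.one_mul]
  have hPtP : Pᵀ * P = 1 := by
    rw [hPdef]
    simp only [transpose_mul, hNt, Matrix.mul_assoc, r3, r1, r2, hSN, hNS,
      Matrix.mul_one, Matrix.one_mul]
  have hMGmulP : MG * P = P * Matrix.diagonal lamv := by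
    rw [hMGP, hPdef]
    simp only [transpose_mul, hNt, Matrix.mul_assoc, r3, r1, r2, hSN, hNS,
      Matrix.mul_one, Matrix.one_mul]
  have hPtMG : Pᵀ * MG = Matrix.diagonal lamv * Pᵀ := by
    rw [hMGP, hPdef]
    simp only [transpose_mul, transpose_transpose, hSt, hNt, Matrix.mul_assoc, r3, r1, r2,
      hSN, hNS, Matrix.mul_one, Matrix.one_mul]
  have hRP : psdSqrt M2 * P = B := by
    rw [hpsd, hPdef]
    simp only [Matrix.mul_assoc, r3, r1, r2, hSN, hNS, Matrix.mul_one, Matrix.one_mul]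
  -- eigenvectors
  set v : Fin k → Fin d → ℝ := fun i => P *ᵥ Pi.single i 1 with hvdef
  have hv_eig : ∀ i, MG *ᵥ v i = lamv i • v i := by
    intro i
    rw [hvdef]
    simp only []
    rw [mulVec_mulVec, hMGmulP, ← mulVec_mulVec, diagonal_mulVec_single, mul_one]
    have hsingle : (Pi.single i (lamv i) : Fin k → ℝ) = lamv i • (Pi.single i 1 : Fin k → ℝ) := by
      funext j
      by_cases hji : j = i
      · subst hji; simp
      · simp [Pi.single_eq_of_ne hji]
    rw [hsingle, mulVec_smul]
  have hv_unit : ∀ i, v i ⬝ᵥ v i = 1 := by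
    intro i
    rw [hvdef]
    simp only []
    rw [dotProduct_mulVec, ← mulVec_transpose, mulVec_mulVec, hPtP, one_mulVec]
    simp [dotProduct, Pi.single_apply]
  have hv_ne : ∀ i, v i ≠ 0 := by
    intro i h
    have h1 := hv_unit i
    rw [h] at h1
    simp at h1
  have hv_sqrt : ∀ i, psdSqrt M2 *ᵥ v i = Real.sqrt (w i) • μ i := by
    intro i
    rw [hvdef]
    simp only []
    rw [mulVec_mulVec, hRP, mulVec_single]
    funext r
    simp [hBapp, mul_comm]
  -- generic eigen-computation helpers
  have hMGu : ∀ u : Fin d → ℝ, MG *ᵥ u = P *ᵥ (Matrix.diagonal lamv *ᵥ (Pᵀ *ᵥ u)) := by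
    intro u
    rw [hMGP, ← mulVec_mulVec, ← mulVec_mulVec]
  have hDy_of : ∀ (t : ℝ) (u : Fin d → ℝ), MG *ᵥ u = t • u →
      Matrix.diagonal lamv *ᵥ (Pᵀ *ᵥ u) = t • (Pᵀ *ᵥ u) := by
    intro t u hu
    calc Matrix.diagonal lamv *ᵥ (Pᵀ *ᵥ u) = (Matrix.diagonal lamv * Pᵀ) *ᵥ u := by
          rw [mulVec_mulVec]
      _ = (Pᵀ * MG) *ᵥ u := by rw [hPtMG]
      _ = Pᵀ *ᵥ (MG *ᵥ u) := by rw [mulVec_mulVec]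
      _ = Pᵀ *ᵥ (t • u) := by rw [hu]
      _ = t • (Pᵀ *ᵥ u) := by rw [mulVec_smul]
  -- diagonalizability via the spectral theorem
  have hMGherm : MG.IsHermitian := by
    rw [Matrix.IsHermitian, conjTranspose_eq_transpose_of_trivial, hMGP]
    simp only [transpose_mul, transpose_transpose, diagonal_transpose, Matrix.mul_assoc]
  have hdiag : ∃ (C : Matrix (Fin d) (Fin d) ℝ) (D : Fin d → ℝ),
      IsUnit C.det ∧ MG = C * Matrix.diagonal D * C⁻¹ := by
    refine ⟨(hMGherm.eigenvectorUnitary : Matrix (Fin d) (Fin d) ℝ), hMGherm.eigenvalues, ?_, ?_⟩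
    · have hCu : (hMGherm.eigenvectorUnitary : Matrix (Fin d) (Fin d) ℝ) *
          star (hMGherm.eigenvectorUnitary : Matrix (Fin d) (Fin d) ℝ) = 1 :=
        Matrix.mem_unitaryGroup_iff.mp hMGherm.eigenvectorUnitary.2
      exact isUnit_iff_exists_inv.mpr ⟨_, by rw [← det_mul, hCu, det_one]⟩
    · have hCu : (hMGherm.eigenvectorUnitary : Matrix (Fin d) (Fin d) ℝ) *
          star (hMGherm.eigenvectorUnitary : Matrix (Fin d) (Fin d) ℝ) = 1 :=
        Matrix.mem_unitaryGroup_iff.mp hMGherm.eigenvectorUnitary.2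
      rw [Matrix.inv_eq_right_inv hCu]
      have h := hMGherm.spectral_theorem
      simpa using h
  refine ⟨hdiag, lamv, v, Equiv.refl _, fun _ => 1, fun _ => Or.inl rfl, ?_, ?_, ?_, ?_, ?_, ?_, ?_, ?_⟩
  · exact fun i => ⟨hlam_ne i, hv_unit i, hv_eig i⟩
  · -- classification of non-zero eigenvalues
    rintro t ht ⟨u, hu0, hu⟩
    have hDy := hDy_of t u hu
    by_cases hy0 : Pᵀ *ᵥ u = 0
    · exfalso
      have h1 : MG *ᵥ u = 0 := by rw [hMGu u, hy0, mulVec_zero, mulVec_zero]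
      rw [hu] at h1
      rcases smul_eq_zero.mp h1 with h | h
      · exact ht h
      · exact hu0 h
    · obtain ⟨j, hj⟩ := Function.ne_iff.mp hy0
      refine ⟨j, ?_⟩
      have h1 := congrFun hDy j
      rw [mulVec_diagonal] at h1
      have h2 : lamv j * (Pᵀ *ᵥ u) j = t * (Pᵀ *ᵥ u) j := by
        simpa [Pi.smul_apply, smul_eq_mul] using h1
      have := mul_right_cancel₀ (by simpa using hj) h2
      exact this.symm
  · -- geometric multiplicity one
    intro i
    have heigsp : Module.End.eigenspace (Matrix.toLin' MG) (lamv i) =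
        Submodule.span ℝ {v i} := by
      apply le_antisymm
      · intro u hu
        rw [Module.End.mem_eigenspace_iff, Matrix.toLin'_apply] at hu
        have hDy := hDy_of (lamv i) u hu
        have hyeq : Pᵀ *ᵥ u = (Pᵀ *ᵥ u) i • (Pi.single i 1 : Fin k → ℝ) := by
          funext j
          by_cases hji : j = i
          · subst hji; simp
          · have h1 := congrFun hDy j
            rw [mulVec_diagonal] at h1
            have h2 : lamv j * (Pᵀ *ᵥ u) j = lamv i * (Pᵀ *ᵥ u) j := by
              simpa [Pi.smul_apply, smul_eq_mul] using h1
            have h3 : (Pᵀ *ᵥ u) j = 0 := by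
              by_contra h0
              exact hji (hlam_inj (mul_right_cancel₀ h0 h2))
            simp [h3, Pi.single_eq_of_ne hji]
        have humul : lamv i • u = lamv i • (((Pᵀ *ᵥ u) i) • v i) := by
          calc lamv i • u = MG *ᵥ u := hu.symm
            _ = P *ᵥ (Matrix.diagonal lamv *ᵥ (Pᵀ *ᵥ u)) := hMGu u
            _ = P *ᵥ (lamv i • (Pᵀ *ᵥ u)) := by rw [hDy]
            _ = lamv i • (P *ᵥ (Pᵀ *ᵥ u)) := by rw [mulVec_smul]
            _ = lamv i • (P *ᵥ (((Pᵀ *ᵥ u) i) • (Pi.single i 1 : Fin k → ℝ))) := by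
                rw [← hyeq]
            _ = lamv i • (((Pᵀ *ᵥ u) i) • (P *ᵥ (Pi.single i 1 : Fin k → ℝ))) := by
                rw [mulVec_smul]
        have hueq := smul_right_injective (Fin d → ℝ) (hlam_ne i) humul
        rw [hueq]
        exact Submodule.smul_mem _ _ (Submodule.mem_span_singleton_self _)
      · rw [Submodule.span_le, Set.singleton_subset_iff, SetLike.mem_coe,
          Module.End.mem_eigenspace_iff, Matrix.toLin'_apply]
        exact hv_eig i
    rw [heigsp]
    exact finrank_span_singleton (hv_ne i)
  · exact fun i => rfl
  · intro i
    simpa using hv_sqrt i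
  · intro i
    simp only [Equiv.refl_apply]
    rw [hv_sqrt i, dotProduct_smul]
    rw [smul_smul]
    have hcoef : lamv i / (Real.sqrt (w i) • (η ⬝ᵥ μ i)) * Real.sqrt (w i) = 1 := by
      rw [smul_eq_mul]
      have hl : η ⬝ᵥ μ i = lamv i := rfl
      rw [hl]
      have hne : Real.sqrt (w i) * lamv i ≠ 0 := mul_ne_zero (hsqne i) (hlam_ne i)
      rw [div_mul_eq_mul_div, div_eq_one_iff_eq hne]; ring
    rw [hcoef, one_smul]
  · -- σ2 recovery
    intro i
    have hApinv : pinv A * A = 1 := pinv_mul_self_of_inj A hAinj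
    have hM1A : M1 = A *ᵥ (fun j => w j * σ2 j) := by
      rw [hM1]
      funext r
      rw [Matrix.mulVec, Finset.sum_apply]
      simp only [Pi.smul_apply, smul_eq_mul, dotProduct, hA]
      exact Finset.sum_congr rfl fun c _ => by simp [Matrix.of_apply]; ring
    rw [hM1A, mulVec_mulVec, hApinv, one_mulVec]
    simp only [one_div]
    rw [eq_comm, inv_mul_eq_iff_eq_mul₀ (hwne i)]
  · -- w recovery
    intro i
    have hApinv : pinv A * A = 1 := pinv_mul_self_of_inj A hAinj
    have hwA : (∑ j, w j • μ j) = A *ᵥ w := by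
      funext r
      rw [Matrix.mulVec, Finset.sum_apply]
      simp only [Pi.smul_apply, smul_eq_mul, dotProduct, hA]
      exact Finset.sum_congr rfl fun c _ => by simp [Matrix.of_apply]; ring
    rw [hwA, mulVec_mulVec, hApinv, one_mulVec]
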